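/- If G is a symmetric positive semidefinite block matrix G = [[G₂₂, G₂₁, G₂₀],[G₂₁ᵀ, G₁₁, G₁₀],[G₂₀ᵀ, G₁₀ᵀ, G₀₀]] and the even quartic polynomial g(u) = ūᵀ G ū (with ū = (v(u), u, 1)) satisfies the vanishing of odd-order parts, then the reduced matrix G̃ = [[G₂₂, G₂₀ + svec(G₁₁)/2],[(G₂₀ + svec(G₁₁)/2)ᵀ, G₀₀]] satisfies g(u) = ũᵀ G̃ ũ for ũ = (v(u), 1), and G̃ can be chosen so that ũᵀ G̃ ũ ≥ 0 for all u. -/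

import Mathlib

open Matrix

abbrev Qidx (n : ℕ) := {p : Fin n × Fin n // p.1 ≤ p.2}

abbrev Idx (n : ℕ) := Qidx n ⊕ (Fin n ⊕ Unit)

def qvec {n : ℕ} (u : Fin n → ℝ) : Qidx n → ℝ := fun p => u p.1.1 * u p.1.2

def ubar {n : ℕ} (u : Fin n → ℝ) : Idx n → ℝ :=
  Sum.elim (qvec u) (Sum.elim u (fun _ => 1))

def utilde {n : ℕ} (u : Fin n → ℝ) : (Qidx n ⊕ Unit) → ℝ :=
  Sum.elim (qvec u) (fun _ => 1)

/-- svec with off-diagonal weight 2, so that qvec(u) ⬝ svec(M) = uᵀ M u. -/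
def svec {n : ℕ} (M : Matrix (Fin n) (Fin n) ℝ) : Qidx n → ℝ :=
  fun p => if p.1.1 = p.1.2 then M p.1.1 p.1.2 else 2 * M p.1.1 p.1.2

lemma qvec_svec {n : ℕ} (u : Fin n → ℝ) (M : Matrix (Fin n) (Fin n) ℝ)
    (hM : ∀ i j, M i j = M j i) :
    qvec u ⬝ᵥ svec M = u ⬝ᵥ M.mulVec u := by
  classical
  set f : Fin n × Fin n → ℝ := fun p => u p.1 * (M p.1 p.2 * u p.2) with hf
  have hswap : ∀ p : Fin n × Fin n, f p.swap = f p := by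
    intro p; simp only [hf, Prod.snd_swap, Prod.fst_swap, hM p.2 p.1]; ring
  have hRHS : u ⬝ᵥ M.mulVec u = ∑ p : Fin n × Fin n, f p := by
    rw [Fintype.sum_prod_type]
    simp [dotProduct, mulVec, Finset.mul_sum, hf]
  have hLHS : qvec u ⬝ᵥ svec M =
      ∑ p ∈ Finset.univ.filter (fun p : Fin n × Fin n => p.1 ≤ p.2),
        (if p.1 = p.2 then f p else 2 * f p) := by
    rw [dotProduct, Finset.sum_subtype (p := fun p : Fin n × Fin n => p.1 ≤ p.2)
      (Finset.univ.filter (fun p : Fin n × Fin n => p.1 ≤ p.2))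
      (by simp) (fun p => if p.1 = p.2 then f p else 2 * f p)]
    apply Finset.sum_congr rfl
    intro p _
    simp only [qvec, svec, hf]
    split <;> ring
  rw [hLHS, hRHS]
  rw [← Finset.sum_filter_add_sum_filter_not Finset.univ (fun p : Fin n × Fin n => p.1 ≤ p.2) f]
  have h2 : ∑ p ∈ Finset.univ.filter (fun p : Fin n × Fin n => ¬ p.1 ≤ p.2), f p
      = ∑ p ∈ Finset.univ.filter (fun p : Fin n × Fin n => p.1 < p.2), f p := by
    apply Finset.sum_nbij' (fun p => p.swap) (fun p => p.swap)
    · intro a ha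
      simp only [Finset.mem_filter, Finset.mem_univ, true_and, not_le] at ha ⊢
      exact ha
    · intro a ha
      simp only [Finset.mem_filter, Finset.mem_univ, true_and, not_le] at ha ⊢
      exact ha
    · intro a _; exact Prod.swap_swap a
    · intro a _; exact Prod.swap_swap a
    · intro a _; exact (hswap a).symm
  rw [h2]
  have h3 : ∑ p ∈ Finset.univ.filter (fun p : Fin n × Fin n => p.1 ≤ p.2),
      (if p.1 = p.2 then f p else 2 * f p)
      = ∑ p ∈ Finset.univ.filter (fun p : Fin n × Fin n => p.1 ≤ p.2),
        (f p + if p.1 = p.2 then 0 else f p) := by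
    apply Finset.sum_congr rfl; intro p _; split <;> ring
  rw [h3, Finset.sum_add_distrib]
  congr 1
  have h5 : (∑ x ∈ Finset.univ.filter (fun p : Fin n × Fin n => p.1 ≤ p.2),
      if x.1 = x.2 then 0 else f x) =
      ∑ x ∈ (Finset.univ.filter (fun p : Fin n × Fin n => p.1 ≤ p.2)).filter
        (fun x => ¬ x.1 = x.2), f x := by
    rw [show (fun x : Fin n × Fin n => if x.1 = x.2 then 0 else f x)
        = fun x => if ¬ x.1 = x.2 then f x else 0 from funext fun x => (ite_not _ _ _).symm]
    rw [← Finset.sum_filter]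
  rw [h5, Finset.filter_filter]
  apply Finset.sum_congr
  · apply Finset.filter_congr; intro p _
    constructor
    · rintro ⟨h1, h2⟩
      exact lt_of_le_of_ne h1 h2
    · intro h; exact ⟨le_of_lt h, ne_of_lt h⟩
  · intros; rfl

theorem stmt10 (n : ℕ)
    (G : Matrix (Idx n) (Idx n) ℝ) (hGsymm : G.IsSymm) (hG : G.PosSemidef)
    -- vanishing of the odd-order parts of g(u) = ūᵀ G ū
    (hodd : ∀ u : Fin n → ℝ,
      qvec u ⬝ᵥ (Matrix.of fun (p : Qidx n) (i : Fin n) =>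
          G (Sum.inl p) (Sum.inr (Sum.inl i))).mulVec u = 0 ∧
      u ⬝ᵥ (fun i : Fin n => G (Sum.inr (Sum.inl i)) (Sum.inr (Sum.inr ()))) = 0)
    (G20t : Qidx n → ℝ)
    (hG20t : G20t = fun p => G (Sum.inl p) (Sum.inr (Sum.inr ())) +
        svec (Matrix.of fun i j : Fin n =>
          G (Sum.inr (Sum.inl i)) (Sum.inr (Sum.inl j))) p / 2)
    (Gt : Matrix (Qidx n ⊕ Unit) (Qidx n ⊕ Unit) ℝ)
    (hGt : Gt = fun a b =>
      match a, b with
      | Sum.inl p, Sum.inl q => G (Sum.inl p) (Sum.inl q)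
      | Sum.inl p, Sum.inr _ => G20t p
      | Sum.inr _, Sum.inl q => G20t q
      | Sum.inr _, Sum.inr _ => G (Sum.inr (Sum.inr ())) (Sum.inr (Sum.inr ()))) :
    ∀ u : Fin n → ℝ,
      ubar u ⬝ᵥ G.mulVec (ubar u) = utilde u ⬝ᵥ Gt.mulVec (utilde u) ∧
      0 ≤ utilde u ⬝ᵥ Gt.mulVec (utilde u) := by
  have hsym : ∀ a b, G a b = G b a := fun a b => hGsymm.apply b a
  intro u
  obtain ⟨h1, h2⟩ := hodd u
  set M : Matrix (Fin n) (Fin n) ℝ := Matrix.of fun i j : Fin n =>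
      G (Sum.inr (Sum.inl i)) (Sum.inr (Sum.inl j)) with hMdef
  have hMsym : ∀ i j, M i j = M j i := fun i j => hsym _ _
  have h11 := qvec_svec u M hMsym
  simp only [dotProduct, mulVec, Matrix.of_apply, hMdef] at h11
  simp only [dotProduct] at h2
  simp only [dotProduct, mulVec, Matrix.of_apply] at h1
  have hmain : ubar u ⬝ᵥ G.mulVec (ubar u) = utilde u ⬝ᵥ Gt.mulVec (utilde u) := by
    subst hGt
    simp only [dotProduct, mulVec, ubar, utilde, Fintype.sum_sum_type, Sum.elim_inl,
      Sum.elim_inr, mul_add, Finset.sum_add_distrib, Finset.univ_unique, Finset.sum_singleton,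
      mul_one, one_mul, PUnit.default_eq_unit]
    have hT1 : ∑ i : Fin n, u i * ∑ p : Qidx n, G (Sum.inr (Sum.inl i)) (Sum.inl p) * qvec u p
        = ∑ p : Qidx n, qvec u p * ∑ i : Fin n, G (Sum.inl p) (Sum.inr (Sum.inl i)) * u i := by
      simp_rw [Finset.mul_sum]
      rw [Finset.sum_comm]
      refine Finset.sum_congr rfl fun p _ => Finset.sum_congr rfl fun i _ => ?_
      rw [hsym (Sum.inr (Sum.inl i)) (Sum.inl p)]; ring
    have hT2 : ∑ p : Qidx n, G (Sum.inr (Sum.inr PUnit.unit)) (Sum.inl p) * qvec u p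
        = ∑ p : Qidx n, qvec u p * G (Sum.inl p) (Sum.inr (Sum.inr ())) := by
      refine Finset.sum_congr rfl fun p _ => ?_
      rw [hsym (Sum.inr (Sum.inr PUnit.unit)) (Sum.inl p)]; ring
    have hT3 : ∑ i : Fin n, G (Sum.inr (Sum.inr PUnit.unit)) (Sum.inr (Sum.inl i)) * u i
        = ∑ i : Fin n, u i * G (Sum.inr (Sum.inl i)) (Sum.inr (Sum.inr ())) := by
      refine Finset.sum_congr rfl fun i _ => ?_
      rw [hsym (Sum.inr (Sum.inr PUnit.unit)) (Sum.inr (Sum.inl i))]; ring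
    have hR1 : ∑ p : Qidx n, G20t p * qvec u p
        = ∑ p : Qidx n, qvec u p * G (Sum.inl p) (Sum.inr (Sum.inr ()))
          + (∑ p : Qidx n, qvec u p * svec M p) / 2 := by
      rw [Finset.sum_div, ← Finset.sum_add_distrib]
      refine Finset.sum_congr rfl fun p _ => ?_
      simp only [hG20t, hMdef]; ring
    have hR2 : ∑ p : Qidx n, qvec u p * G20t p
        = ∑ p : Qidx n, qvec u p * G (Sum.inl p) (Sum.inr (Sum.inr ()))
          + (∑ p : Qidx n, qvec u p * svec M p) / 2 := by
      rw [Finset.sum_div, ← Finset.sum_add_distrib]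
      refine Finset.sum_congr rfl fun p _ => ?_
      simp only [hG20t, hMdef]; ring
    rw [hT1, hT2, hT3, hR1, hR2, h1, h2]
    rw [show (∑ i : Fin n, u i * ∑ j : Fin n,
        G (Sum.inr (Sum.inl i)) (Sum.inr (Sum.inl j)) * u j)
      = ∑ p : Qidx n, qvec u p * svec M p from h11.symm]
    ring
  refine ⟨hmain, ?_⟩
  rw [← hmain]
  have := hG.dotProduct_mulVec_nonneg (ubar u)
  simpa using this
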